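/- Let L/K be an extension of finite fields, let χ : Lˣ → ℂˣ be a character, let F be an intermediate field of L/K, and let ψ : Fˣ → ℂˣ be a K-regular character (i.e. the stabilizer of ψ in Gal(F/K) under precomposition is trivial). If χ = ψ ∘ N_{L/F}, then F is equal to the stabilizer field of χ, i.e. F is the fixed field in L of the stabilizer of χ in Gal(L/K) under the action σ·χ = χ ∘ σ. -/

import Mathlib

/-- The stabilizer of a character `χ : Lˣ → ℂˣ` under the precomposition action
`σ · χ = χ ∘ σ` of `Gal(L/K)`, as a subgroup of `L ≃ₐ[K] L`. -/
def charStab (K L : Type) [Field K] [Field L] [Algebra K L] (χ : Lˣ →* ℂˣ) :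
    Subgroup (L ≃ₐ[K] L) where
  carrier := {σ | ∀ x : Lˣ, χ (Units.map (σ : L →* L) x) = χ x}
  one_mem' := fun x => by
    have h : Units.map ((1 : L ≃ₐ[K] L) : L →* L) x = x := by ext; simp
    rw [h]
  mul_mem' := fun {σ τ} hσ hτ x => by
    have h : Units.map ((σ * τ : L ≃ₐ[K] L) : L →* L) x
        = Units.map (σ : L →* L) (Units.map (τ : L →* L) x) := by
      ext; simp
    rw [h, hσ, hτ]
  inv_mem' := fun {σ} hσ x => by
    have h := hσ (Units.map ((σ⁻¹ : L ≃ₐ[K] L) : L →* L) x)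
    have h2 : Units.map (σ : L →* L) (Units.map ((σ⁻¹ : L ≃ₐ[K] L) : L →* L) x) = x := by
      ext
      show (σ * σ⁻¹) (x : L) = (x : L)
      rw [mul_inv_cancel, AlgEquiv.one_apply]
    rw [h2] at h
    exact h.symm




variable (F L : Type*) [Field F] [Field L] [Finite F] [Finite L] [Algebra F L]

noncomputable def frobAlgHom : L →ₐ[F] L where
  toFun := fun x => x ^ (Nat.card F)
  map_one' := one_pow _
  map_mul' := fun x y => mul_pow x y _
  map_zero' := zero_pow (Nat.card_pos (α := F)).ne'
  map_add' := by
    intro x y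
    obtain ⟨p, hp⟩ := CharP.exists F
    haveI : CharP F p := hp
    haveI : CharP L p := charP_of_injective_algebraMap' F (A := L) p
    haveI : Fact p.Prime := ⟨CharP.char_is_prime F p⟩
    have : Fintype F := Fintype.ofFinite F
    obtain ⟨n, hn⟩ := FiniteField.card F p
    simp only [Nat.card_eq_fintype_card, hn]
    exact add_pow_char_pow ..
  commutes' := by
    intro y
    have : Fintype F := Fintype.ofFinite F
    simp only [Nat.card_eq_fintype_card, ← map_pow, FiniteField.pow_card]

noncomputable def frobAlg : L ≃ₐ[F] L :=
  AlgEquiv.ofBijective (frobAlgHom F L)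
    (Finite.injective_iff_bijective.mp (frobAlgHom F L).toRingHom.injective)

lemma frobAlg_apply (x : L) : frobAlg F L x = x ^ (Nat.card F) := rfl

lemma frobAlg_pow_apply (i : ℕ) (x : L) : (frobAlg F L ^ i) x = x ^ (Nat.card F ^ i) := by
  induction i with
  | zero => simp
  | succ n ih =>
    rw [pow_succ', AlgEquiv.mul_apply, frobAlg_apply, ih, ← pow_mul, mul_comm, pow_succ']

lemma orderOf_frobAlg : orderOf (frobAlg F L) = Module.finrank F L := by
  have : Fintype F := Fintype.ofFinite F
  have : Fintype L := Fintype.ofFinite L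
  have hcard : Fintype.card L = Fintype.card F ^ Module.finrank F L := Module.card_eq_pow_finrank
  set n := Module.finrank F L with hn
  have hnpos : 0 < n := Module.finrank_pos
  have h1 : 1 < Fintype.card F := Fintype.one_lt_card
  have hpow : ∀ i, 0 < i → i < n → (frobAlg F L) ^ i ≠ 1 := by
    intro i hi hin hcontra
    obtain ⟨g, hg⟩ := IsCyclic.exists_generator (α := Lˣ)
    have hog : orderOf g = Fintype.card L - 1 := by
      have h0 := orderOf_eq_card_of_forall_mem_zpowers hg
      rw [h0, Nat.card_units, Nat.card_eq_fintype_card]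
    have : ((g : L)) ^ (Nat.card F ^ i) = (g : L) := by
      have := congrArg (fun σ : L ≃ₐ[F] L => σ (g : L)) hcontra
      simpa [frobAlg_pow_apply] using this
    have hgu : g ^ (Nat.card F ^ i) = g := Units.ext (by push_cast; exact this)
    have hdvd : orderOf g ∣ Nat.card F ^ i - 1 := by
      apply orderOf_dvd_of_pow_eq_one
      have hle : 1 ≤ Nat.card F ^ i := Nat.one_le_pow _ _ Nat.card_pos
      have h6 : g ^ (Nat.card F ^ i - 1) * g = 1 * g := by
        rw [one_mul, ← pow_succ, Nat.sub_add_cancel hle]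
        exact hgu
      exact mul_right_cancel h6
    have hlt : Nat.card F ^ i - 1 < Fintype.card L - 1 := by
      have h2 : Nat.card F ^ i < Fintype.card L := by
        rw [hcard, Nat.card_eq_fintype_card]
        exact Nat.pow_lt_pow_right h1 hin
      exact Nat.sub_lt_sub_right (Nat.one_le_pow _ _ Nat.card_pos) h2
    have hpos : 0 < Nat.card F ^ i - 1 := by
      have : 1 < Nat.card F ^ i := by
        rw [Nat.card_eq_fintype_card]
        exact Nat.one_lt_pow hi.ne' h1
      omega
    have := Nat.le_of_dvd hpos (hog ▸ hdvd)
    omega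
  have hn1 : (frobAlg F L) ^ n = 1 := by
    ext x
    rw [frobAlg_pow_apply]
    show x ^ (Nat.card F ^ n) = x
    rw [Nat.card_eq_fintype_card, ← hcard]
    exact FiniteField.pow_card x
  have hle : orderOf (frobAlg F L) ≤ n := orderOf_le_of_pow_eq_one hnpos hn1
  have hpos : 0 < orderOf (frobAlg F L) := orderOf_pos _
  by_contra hne
  exact hpow _ hpos (lt_of_le_of_ne hle hne) (pow_orderOf_eq_one _)

lemma norm_eq_pow (x : L) : algebraMap F L (Algebra.norm F x)
    = x ^ (∑ i ∈ Finset.range (Module.finrank F L), Nat.card F ^ i) := by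
  haveI : FiniteDimensional F L := Module.Finite.of_finite
  rw [Algebra.norm_eq_prod_automorphisms]
  have hord : orderOf (frobAlg F L) = Fintype.card (L ≃ₐ[F] L) := by
    rw [orderOf_frobAlg, ← Nat.card_eq_fintype_card, IsGalois.card_aut_eq_finrank]
  have hf : Function.Bijective (fun i : Fin (Module.finrank F L) => frobAlg F L ^ (i : ℕ)) := by
    have hinj : Function.Injective
        (fun i : Fin (Module.finrank F L) => frobAlg F L ^ (i : ℕ)) := by
      intro i j hij
      simp only at hij
      rw [pow_inj_mod, orderOf_frobAlg, Nat.mod_eq_of_lt i.2, Nat.mod_eq_of_lt j.2] at hij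
      exact Fin.ext hij
    have : Fintype.card (Fin (Module.finrank F L)) = Fintype.card (L ≃ₐ[F] L) := by
      rw [Fintype.card_fin, ← Nat.card_eq_fintype_card, IsGalois.card_aut_eq_finrank]
    exact (Fintype.bijective_iff_injective_and_card _).mpr ⟨hinj, this⟩
  rw [← Fintype.prod_bijective _ hf _ _ (fun i => rfl)]
  simp only [frobAlg_pow_apply]
  rw [Finset.prod_pow_eq_pow_sum]
  rw [Finset.sum_fin_eq_sum_range]
  congr 1
  apply Finset.sum_congr rfl
  intro i hi
  rw [dif_pos (Finset.mem_range.mp hi)]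

lemma geom_sum_card : (∑ i ∈ Finset.range (Module.finrank F L), Nat.card F ^ i) * (Nat.card F - 1)
    = Nat.card F ^ (Module.finrank F L) - 1 := by
  have hq : 1 ≤ Nat.card F := Nat.card_pos
  have hqn : 1 ≤ Nat.card F ^ (Module.finrank F L) := Nat.one_le_pow _ _ Nat.card_pos
  have := geom_sum_mul (Nat.card F : ℤ) (Module.finrank F L)
  have h2 : ((∑ i ∈ Finset.range (Module.finrank F L), Nat.card F ^ i) * (Nat.card F - 1) : ℕ)
      = ((Nat.card F ^ (Module.finrank F L) - 1 : ℕ) : ℤ) := by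
    push_cast [Nat.cast_sub hq, Nat.cast_sub hqn] at this ⊢
    linarith [this]
  exact_mod_cast h2

lemma norm_units_surjective :
    Function.Surjective (Units.map (Algebra.norm F : L →* F)) := by
  classical
  have hq : 1 < Nat.card F := Finite.one_lt_card
  obtain ⟨g, hg⟩ := IsCyclic.exists_generator (α := Lˣ)
  have hog : orderOf g = Nat.card F ^ (Module.finrank F L) - 1 := by
    rw [orderOf_eq_card_of_forall_mem_zpowers hg, Nat.card_units]
    haveI : FiniteDimensional F L := Module.Finite.of_finite
    have : Fintype F := Fintype.ofFinite F
    have : Fintype L := Fintype.ofFinite L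
    rw [Nat.card_eq_fintype_card, Nat.card_eq_fintype_card, (Module.card_eq_pow_finrank :
      Fintype.card L = Fintype.card F ^ Module.finrank F L)]
  set d := ∑ i ∈ Finset.range (Module.finrank F L), Nat.card F ^ i with hd
  have hdpos : 0 < d := by
    haveI : FiniteDimensional F L := Module.Finite.of_finite
    apply Finset.sum_pos
    · intro i _
      exact Nat.pow_pos Nat.card_pos
    · exact ⟨0, Finset.mem_range.mpr Module.finrank_pos⟩
  have hgeom := geom_sum_card F L
  -- the image of N g in Lˣ is g ^ d
  have hjinj : Function.Injective (Units.map (algebraMap F L : F →* L)) :=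
    Units.map_injective (algebraMap F L).injective
  have hkey : Units.map (algebraMap F L : F →* L) (Units.map (Algebra.norm F : L →* F) g)
      = g ^ d := by
    ext
    push_cast
    exact norm_eq_pow F L (g : L)
  have hord : orderOf (Units.map (Algebra.norm F : L →* F) g) = Nat.card F - 1 := by
    rw [← orderOf_injective _ hjinj, hkey, orderOf_pow, hog]
    have hdvd : d ∣ Nat.card F ^ (Module.finrank F L) - 1 := ⟨Nat.card F - 1, hgeom.symm⟩
    rw [Nat.gcd_eq_right hdvd]
    rw [← hgeom, Nat.mul_div_cancel_left _ hdpos]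
  have htop : Subgroup.zpowers (Units.map (Algebra.norm F : L →* F) g) = ⊤ := by
    apply Subgroup.eq_top_of_card_eq
    rw [Nat.card_zpowers, hord, Nat.card_units]
  intro y
  have : y ∈ Subgroup.zpowers (Units.map (Algebra.norm F : L →* F) g) := htop ▸ Subgroup.mem_top y
  obtain ⟨k, hk⟩ := this
  exact ⟨g ^ k, by rw [map_zpow]; exact hk⟩

lemma norm_restrictNormal (K : Type*) [Field K] [Algebra K F] [Algebra K L]
    [IsScalarTower K F L] [Normal K F] (σ : L ≃ₐ[K] L) (x : L) :
    Algebra.norm F (σ x) = (AlgEquiv.restrictNormal σ F) (Algebra.norm F x) := by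
  have he : RingHom.comp (algebraMap F L) ((AlgEquiv.restrictNormal σ F : F ≃+* F) : F →+* F)
      = RingHom.comp ((σ : L ≃+* L) : L →+* L) (algebraMap F L) := by
    ext y
    exact AlgEquiv.restrictNormal_commutes σ F y
  have := Algebra.norm_eq_of_equiv_equiv (AlgEquiv.restrictNormal σ F : F ≃+* F)
    (σ : L ≃+* L) he x
  rw [this]
  exact ((σ.restrictNormal F).apply_symm_apply _).symm

/-- Let `L/K` be an extension of finite fields, `χ : Lˣ → ℂˣ` a character, `F` an
intermediate field of `L/K`, and `ψ : Fˣ → ℂˣ` a `K`-regular character (the stabilizer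
of `ψ` in `Gal(F/K)` under precomposition is trivial). If `χ = ψ ∘ N_{L/F}`, then `F`
is the stabilizer field of `χ`, i.e. the fixed field in `L` of the stabilizer of `χ`
in `Gal(L/K)`. -/
theorem statement1 (K L : Type) [Field K] [Field L] [Fintype K] [Fintype L]
    [Algebra K L] (χ : Lˣ →* ℂˣ) (F : IntermediateField K L) (ψ : (↥F)ˣ →* ℂˣ)
    (hreg : ∀ σ : ↥F ≃ₐ[K] ↥F,
      (∀ y : (↥F)ˣ, ψ (Units.map (σ : ↥F →* ↥F) y) = ψ y) → σ = 1)
    (hχ : χ = ψ.comp (Units.map (Algebra.norm ↥F : L →* ↥F))) :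
    F = IntermediateField.fixedField (charStab K L χ) := by
  haveI : FiniteDimensional K L := Module.Finite.of_finite
  have hcomm : ∀ (σ : L ≃ₐ[K] L) (x : Lˣ),
      Units.map (Algebra.norm ↥F : L →* ↥F) (Units.map (σ : L →* L) x)
      = Units.map ((σ.restrictNormal ↥F : ↥F ≃ₐ[K] ↥F) : ↥F →* ↥F)
        (Units.map (Algebra.norm ↥F : L →* ↥F) x) := by
    intro σ x
    ext
    simp only [Units.coe_map, MonoidHom.coe_coe]
    exact congrArg Subtype.val (norm_restrictNormal ↥F L K σ (x : L))
  have hstab : charStab K L χ = F.fixingSubgroup := by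
    ext σ
    constructor
    · intro hσ
      have hχσ : ∀ x : Lˣ, χ (Units.map (σ : L →* L) x) = χ x := hσ
      have hall : ∀ y : (↥F)ˣ, ψ (Units.map ((σ.restrictNormal ↥F : ↥F ≃ₐ[K] ↥F) : ↥F →* ↥F) y)
          = ψ y := by
        intro y
        obtain ⟨x, rfl⟩ := norm_units_surjective ↥F L y
        rw [← hcomm]
        have h3 := hχσ x
        rw [hχ] at h3
        exact h3
      have h1 : σ.restrictNormal ↥F = 1 := hreg _ hall
      rw [IntermediateField.mem_fixingSubgroup_iff]
      intro x hx
      have h2 := AlgEquiv.restrictNormal_commutes σ ↥F ⟨x, hx⟩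
      rw [h1] at h2
      simpa using h2.symm
    · intro hσ
      have h1 : σ.restrictNormal ↥F = 1 := by
        ext y
        have h2 := AlgEquiv.restrictNormal_commutes σ ↥F y
        have h3 : σ (algebraMap ↥F L y) = algebraMap ↥F L y := by
          rw [IntermediateField.mem_fixingSubgroup_iff] at hσ
          exact hσ _ y.2
        rw [h3] at h2
        rw [AlgEquiv.one_apply]
        exact h2
      show ∀ x : Lˣ, χ (Units.map (σ : L →* L) x) = χ x
      intro x
      rw [hχ]
      show ψ (Units.map (Algebra.norm ↥F : L →* ↥F) (Units.map (σ : L →* L) x))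
        = ψ (Units.map (Algebra.norm ↥F : L →* ↥F) x)
      rw [hcomm, h1]
      congr 1
  rw [hstab]
  exact (IsGalois.fixedField_fixingSubgroup F).symm
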